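/- For the cone C ⊂ ℤ² generated by v_1=(0,1), v_2=(1,1), v_3=(3,1) with the fan Σ having maximal cones {1,2} and {2,3}, the K-theory ring K_0(ℙ_Σ) = ℂ[R_1^{±1},R_2^{±1},R_3^{±1}]/⟨(1−R_1)(1−R_3), R_1R_2R_3−1, R_2R_3³−1⟩ is isomorphic to ℂ[R_3^{±1}]/⟨(1−R_3)²(1+R_3)⟩, and this ring is 3-dimensional over ℂ with basis 1, R_3, R_3². -/

import Mathlib

open scoped LaurentPolynomial

/-- The ring of Laurent polynomials `ℂ[R₁^{±1}, R₂^{±1}, R₃^{±1}]`, modelled as the group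
algebra of `ℤ³`. -/
noncomputable abbrev Laurent3 := AddMonoidAlgebra ℂ (Fin 3 →₀ ℤ)

/-- The Laurent monomial `Rᵢ`. -/
noncomputable def Rvar (i : Fin 3) : Laurent3 :=
  AddMonoidAlgebra.single (Finsupp.single i 1) 1

/-- The defining ideal `⟨(1−R₁)(1−R₃), R₁R₂R₃−1, R₂R₃³−1⟩` of `K₀(ℙ_Σ)` for
`v₁=(0,1)`, `v₂=(1,1)`, `v₃=(3,1)`, `Σ = {{1,2},{2,3}}`. -/
noncomputable def idealK6 : Ideal Laurent3 :=
  Ideal.span {(1 - Rvar 0) * (1 - Rvar 2), Rvar 0 * Rvar 1 * Rvar 2 - 1,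
    Rvar 1 * Rvar 2 ^ 3 - 1}

/-- The target ideal `⟨(1−R₃)²(1+R₃)⟩` of `ℂ[R₃^{±1}]`. -/
noncomputable def idealT6 : Ideal (LaurentPolynomial ℂ) :=
  Ideal.span {(1 - LaurentPolynomial.T 1) ^ 2 * (1 + LaurentPolynomial.T 1)}


section Aux
open Polynomial

-- Part B groundwork
noncomputable def pB : Polynomial ℂ := X ^ 3 - X ^ 2 - X + 1

lemma pB_monic : pB.Monic := by unfold pB; monicity!

lemma pB_natDegree : pB.natDegree = 3 := by unfold pB; compute_degree!

noncomputable abbrev Q2 := LaurentPolynomial ℂ ⧸ idealT6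
noncomputable def tq : Q2 := Ideal.Quotient.mk idealT6 (LaurentPolynomial.T 1)

lemma ht : tq ^ 3 - tq ^ 2 - tq + 1 = 0 := by
  have : tq ^ 3 - tq ^ 2 - tq + 1 =
      Ideal.Quotient.mk idealT6 ((1 - LaurentPolynomial.T 1) ^ 2 * (1 + LaurentPolynomial.T 1)) := by
    simp only [tq, map_mul, map_pow, map_sub, map_add, map_one]
    ring
  rw [this, Ideal.Quotient.eq_zero_iff_mem]
  exact Ideal.subset_span rfl

noncomputable abbrev B := AdjoinRoot pB
noncomputable def rt : B := AdjoinRoot.root pB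

lemma hrt : rt ^ 3 - rt ^ 2 - rt + 1 = 0 := by
  have h0 : AdjoinRoot.mk pB pB = 0 := AdjoinRoot.mk_self
  have : pB = X ^ 3 - X ^ 2 - X + 1 := rfl
  rw [this] at h0
  simp only [map_add, map_sub, map_pow, map_one, AdjoinRoot.mk_X] at h0
  exact h0

noncomputable def uB : Bˣ where
  val := rt
  inv := 1 + rt - rt ^ 2
  val_inv := by linear_combination -hrt
  inv_val := by linear_combination -hrt

noncomputable def vQ : Q2ˣ where
  val := tq
  inv := 1 + tq - tq ^ 2
  val_inv := by linear_combination -ht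
  inv_val := by linear_combination -ht

-- the map LaurentPolynomial ℂ → B
noncomputable def phiPre : LaurentPolynomial ℂ →ₐ[ℂ] B :=
  AddMonoidAlgebra.lift ℂ B ℤ ((Units.coeHom B).comp (zpowersHom Bˣ uB))

lemma phiPre_T : phiPre (LaurentPolynomial.T 1) = rt := by
  show AddMonoidAlgebra.lift ℂ B ℤ _ (AddMonoidAlgebra.single (1:ℤ) (1:ℂ)) = rt
  rw [AddMonoidAlgebra.lift_single]
  simp only [one_smul, MonoidHom.coe_comp, Function.comp_apply, zpowersHom_apply,
    toAdd_ofAdd, zpow_one, Units.coeHom_apply]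
  rfl

lemma phiPre_ker : ∀ a ∈ idealT6, phiPre a = 0 := by
  intro a ha
  rw [idealT6, Ideal.mem_span_singleton] at ha
  obtain ⟨c, rfl⟩ := ha
  rw [map_mul]
  have : phiPre ((1 - LaurentPolynomial.T 1) ^ 2 * (1 + LaurentPolynomial.T 1)) = 0 := by
    rw [map_mul, map_pow, map_sub, map_add, map_one, phiPre_T]
    linear_combination hrt
  rw [this, zero_mul]

noncomputable def phiQ : Q2 →ₐ[ℂ] B := Ideal.Quotient.liftₐ idealT6 phiPre phiPre_ker

lemma aeval_tq : Polynomial.aeval tq pB = 0 := by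
  have : pB = X ^ 3 - X ^ 2 - X + 1 := rfl
  rw [this]
  simp only [map_add, map_sub, map_pow, map_one, Polynomial.aeval_X]
  exact ht

noncomputable def psiQ : B →ₐ[ℂ] Q2 := AdjoinRoot.liftAlgHom pB (Algebra.ofId ℂ Q2) tq aeval_tq

lemma psiQ_rt : psiQ rt = tq := AdjoinRoot.liftAlgHom_root (h := aeval_tq) ..

noncomputable def eQB : Q2 ≃ₐ[ℂ] B := by
  refine AlgEquiv.ofAlgHom phiQ psiQ ?_ ?_
  · apply AdjoinRoot.algHom_ext
    show phiQ (psiQ rt) = rt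
    rw [psiQ_rt]
    show phiQ (Ideal.Quotient.mk idealT6 (LaurentPolynomial.T 1)) = _
    rw [phiQ, Ideal.Quotient.liftₐ_apply]
    exact phiPre_T
  · apply Ideal.Quotient.algHom_ext
    refine AddMonoidAlgebra.algHom_ext' (MonoidHom.ext_mint ?_) (Subsingleton.elim _ _)
    show psiQ (phiQ (Ideal.Quotient.mk idealT6 (LaurentPolynomial.T 1))) =
      Ideal.Quotient.mk idealT6 (LaurentPolynomial.T 1)
    rw [phiQ, Ideal.Quotient.liftₐ_apply]
    show psiQ (phiPre (LaurentPolynomial.T 1)) = _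
    rw [phiPre_T, psiQ_rt, tq]

noncomputable def pbB : PowerBasis ℂ B := AdjoinRoot.powerBasis' pB_monic

lemma pbB_dim : pbB.dim = 3 := by
  simp [pbB, AdjoinRoot.powerBasis', pB_natDegree]

noncomputable def basisQ2 : Module.Basis (Fin 3) ℂ Q2 :=
  (pbB.basis.map eQB.symm.toLinearEquiv).reindex (finCongr pbB_dim)

lemma basisQ2_apply (k : Fin 3) : basisQ2 k = tq ^ (k : ℕ) := by
  rw [basisQ2, Module.Basis.reindex_apply, Module.Basis.map_apply]
  have h1 : pbB.basis ((finCongr pbB_dim).symm k) = rt ^ (k : ℕ) := by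
    rw [pbB.basis_eq_pow]
    show rt ^ (((finCongr pbB_dim).symm k : Fin pbB.dim) : ℕ) = rt ^ (k : ℕ)
    congr 1
  rw [h1]
  show eQB.symm (rt ^ (k : ℕ)) = tq ^ (k : ℕ)
  rw [AlgEquiv.symm_apply_eq, map_pow]
  congr 1
  symm
  show phiQ (Ideal.Quotient.mk idealT6 (LaurentPolynomial.T 1)) = rt
  rw [phiQ, Ideal.Quotient.liftₐ_apply]
  exact phiPre_T

lemma finrankQ2 : Module.finrank ℂ Q2 = 3 := by
  rw [Module.finrank_eq_card_basis basisQ2, Fintype.card_fin]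

-- Part A : Laurent3 ⧸ idealK6 ≃ₐ Q2
noncomputable abbrev Q1 := Laurent3 ⧸ idealK6
noncomputable def ρ (i : Fin 3) : Q1 := Ideal.Quotient.mk idealK6 (Rvar i)

lemma hz1 : Ideal.Quotient.mk idealK6 ((1 - Rvar 0) * (1 - Rvar 2)) = 0 :=
  Ideal.Quotient.eq_zero_iff_mem.2 (Ideal.subset_span (Or.inl rfl))
lemma hz2 : Ideal.Quotient.mk idealK6 (Rvar 0 * Rvar 1 * Rvar 2 - 1) = 0 :=
  Ideal.Quotient.eq_zero_iff_mem.2 (Ideal.subset_span (Or.inr (Or.inl rfl)))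
lemma hz3 : Ideal.Quotient.mk idealK6 (Rvar 1 * Rvar 2 ^ 3 - 1) = 0 :=
  Ideal.Quotient.eq_zero_iff_mem.2 (Ideal.subset_span (Or.inr (Or.inr rfl)))

lemma hg1 : (1 - ρ 0) * (1 - ρ 2) = 0 := by
  have := hz1; simp only [map_mul, map_sub, map_one] at this; exact this
lemma hg3 : ρ 1 * ρ 2 ^ 3 = 1 := by
  have := hz3
  simp only [map_sub, map_mul, map_pow, map_one, sub_eq_zero] at this
  exact this

noncomputable def gmon : Laurent3 :=
  AddMonoidAlgebra.single (-(Finsupp.single 1 1 + Finsupp.single 2 1)) 1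

lemma hginv : gmon * (Rvar 1 * Rvar 2) = 1 := by
  rw [gmon, Rvar, Rvar, AddMonoidAlgebra.single_mul_single, AddMonoidAlgebra.single_mul_single]
  rw [AddMonoidAlgebra.one_def]
  congr 1
  · abel
  · norm_num

lemma hρ0 : ρ 0 = ρ 2 ^ 2 := by
  have key : Rvar 0 - Rvar 2 ^ 2 =
      gmon * ((Rvar 0 * Rvar 1 * Rvar 2 - 1) - (Rvar 1 * Rvar 2 ^ 3 - 1)) := by
    linear_combination (Rvar 2 ^ 2 - Rvar 0) * hginv
  have : ρ 0 - ρ 2 ^ 2 = Ideal.Quotient.mk idealK6 gmon *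
      (Ideal.Quotient.mk idealK6 (Rvar 0 * Rvar 1 * Rvar 2 - 1) -
       Ideal.Quotient.mk idealK6 (Rvar 1 * Rvar 2 ^ 3 - 1)) := by
    rw [ρ, ρ, ← map_pow, ← map_sub, ← map_sub, ← map_mul, key]
  rw [hz2, hz3, sub_self, mul_zero, sub_eq_zero] at this
  exact this

noncomputable def rQ : Q1ˣ where
  val := ρ 2
  inv := ρ 1 * ρ 2 ^ 2
  val_inv := by linear_combination hg3
  inv_val := by linear_combination hg3

noncomputable def wK : (Fin 3 →₀ ℤ) →+ ℤ :=
  Finsupp.liftAddHom fun i => zmultiplesHom ℤ (![2, -3, 1] i)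

noncomputable def phi1Pre : Laurent3 →ₐ[ℂ] Q2 :=
  AddMonoidAlgebra.lift ℂ Q2 (Fin 3 →₀ ℤ)
    ((Units.coeHom Q2).comp ((zpowersHom Q2ˣ vQ).comp (AddMonoidHom.toMultiplicative wK)))

lemma phi1Pre_R (i : Fin 3) :
    phi1Pre (Rvar i) = ((vQ ^ (![2, -3, 1] i : ℤ) : Q2ˣ) : Q2) := by
  show AddMonoidAlgebra.lift ℂ Q2 (Fin 3 →₀ ℤ) _ (AddMonoidAlgebra.single (Finsupp.single i 1) 1) = _
  rw [AddMonoidAlgebra.lift_single]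
  simp only [one_smul, MonoidHom.coe_comp, Function.comp_apply, zpowersHom_apply,
    Units.coeHom_apply]
  congr 2
  show Multiplicative.toAdd (AddMonoidHom.toMultiplicative wK (Multiplicative.ofAdd (Finsupp.single i 1))) = _
  show wK (Finsupp.single i 1) = _
  rw [wK, Finsupp.liftAddHom_apply_single]
  simp [zmultiplesHom_apply]

lemma hv1 : ((vQ ^ (1 : ℤ) : Q2ˣ) : Q2) = tq := by rw [zpow_one]; rfl

lemma hv2 : ((vQ ^ (2 : ℤ) : Q2ˣ) : Q2) = tq ^ 2 := by
  rw [show (2:ℤ) = ((2:ℕ):ℤ) from rfl, zpow_natCast, Units.val_pow_eq_pow_val]; rfl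

lemma phi1Pre_ker : ∀ a ∈ idealK6, phi1Pre a = 0 := by
  have hmem : idealK6 ≤ RingHom.ker (phi1Pre : Laurent3 →+* Q2) := by
    rw [idealK6, Ideal.span_le]
    rintro x (rfl | rfl | rfl) <;> rw [SetLike.mem_coe, RingHom.mem_ker]
    · show phi1Pre ((1 - Rvar 0) * (1 - Rvar 2)) = 0
      rw [map_mul, map_sub, map_sub, map_one, phi1Pre_R, phi1Pre_R]
      show (1 - ((vQ ^ (2:ℤ) : Q2ˣ) : Q2)) * (1 - ((vQ ^ (1:ℤ) : Q2ˣ) : Q2)) = 0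
      rw [hv1, hv2]
      linear_combination ht
    · show phi1Pre (Rvar 0 * Rvar 1 * Rvar 2 - 1) = 0
      rw [map_sub, map_mul, map_mul, map_one, phi1Pre_R, phi1Pre_R, phi1Pre_R]
      show ((vQ ^ (2:ℤ) : Q2ˣ) : Q2) * ((vQ ^ (-3:ℤ) : Q2ˣ) : Q2) * ((vQ ^ (1:ℤ) : Q2ˣ) : Q2) - 1 = 0
      rw [← Units.val_mul, ← Units.val_mul]
      have : vQ ^ (2:ℤ) * vQ ^ (-3:ℤ) * vQ ^ (1:ℤ) = 1 := by group
      rw [this, Units.val_one, sub_self]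
    · show phi1Pre (Rvar 1 * Rvar 2 ^ 3 - 1) = 0
      rw [map_sub, map_mul, map_pow, map_one, phi1Pre_R, phi1Pre_R]
      show ((vQ ^ (-3:ℤ) : Q2ˣ) : Q2) * ((vQ ^ (1:ℤ) : Q2ˣ) : Q2) ^ 3 - 1 = 0
      rw [← Units.val_pow_eq_pow_val, ← Units.val_mul]
      have : vQ ^ (-3:ℤ) * (vQ ^ (1:ℤ)) ^ 3 = 1 := by group
      rw [this, Units.val_one, sub_self]
  exact fun a ha => hmem ha

noncomputable def phi1 : Q1 →ₐ[ℂ] Q2 := Ideal.Quotient.liftₐ idealK6 phi1Pre phi1Pre_ker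

noncomputable def psi1Pre : LaurentPolynomial ℂ →ₐ[ℂ] Q1 :=
  AddMonoidAlgebra.lift ℂ Q1 ℤ ((Units.coeHom Q1).comp (zpowersHom Q1ˣ rQ))

lemma psi1Pre_T : psi1Pre (LaurentPolynomial.T 1) = ρ 2 := by
  show AddMonoidAlgebra.lift ℂ Q1 ℤ _ (AddMonoidAlgebra.single (1:ℤ) (1:ℂ)) = ρ 2
  rw [AddMonoidAlgebra.lift_single]
  simp only [one_smul, MonoidHom.coe_comp, Function.comp_apply, zpowersHom_apply,
    toAdd_ofAdd, zpow_one, Units.coeHom_apply]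
  rfl

lemma psi1Pre_ker : ∀ a ∈ idealT6, psi1Pre a = 0 := by
  intro a ha
  rw [idealT6, Ideal.mem_span_singleton] at ha
  obtain ⟨c, rfl⟩ := ha
  rw [map_mul]
  have : psi1Pre ((1 - LaurentPolynomial.T 1) ^ 2 * (1 + LaurentPolynomial.T 1)) = 0 := by
    rw [map_mul, map_pow, map_sub, map_add, map_one, psi1Pre_T]
    linear_combination hg1 + (1 - ρ 2) * hρ0
  rw [this, zero_mul]

noncomputable def psi1 : Q2 →ₐ[ℂ] Q1 := Ideal.Quotient.liftₐ idealT6 psi1Pre psi1Pre_ker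

lemma psi1_tq : psi1 tq = ρ 2 := by
  rw [tq, psi1, Ideal.Quotient.liftₐ_apply]
  exact psi1Pre_T

lemma psi1_vpow (n : ℤ) : psi1 ((vQ ^ n : Q2ˣ) : Q2) = ((rQ ^ n : Q1ˣ) : Q1) := by
  have hu : Units.map (psi1 : Q2 →* Q1) vQ = rQ := by
    apply Units.ext
    show psi1 tq = ρ 2
    exact psi1_tq
  calc psi1 ((vQ ^ n : Q2ˣ) : Q2) = ((Units.map (psi1 : Q2 →* Q1) (vQ ^ n) : Q1ˣ) : Q1) := by
        rw [Units.coe_map]; rfl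
    _ = (((Units.map (psi1 : Q2 →* Q1) vQ) ^ n : Q1ˣ) : Q1) := by rw [map_zpow]
    _ = ((rQ ^ n : Q1ˣ) : Q1) := by rw [hu]

noncomputable def eQ1Q2 : Q1 ≃ₐ[ℂ] Q2 := by
  refine AlgEquiv.ofAlgHom phi1 psi1 ?_ ?_
  · apply Ideal.Quotient.algHom_ext
    refine AddMonoidAlgebra.algHom_ext' (MonoidHom.ext_mint ?_) (Subsingleton.elim _ _)
    show phi1 (psi1 (Ideal.Quotient.mk idealT6 (LaurentPolynomial.T 1))) =
      Ideal.Quotient.mk idealT6 (LaurentPolynomial.T 1)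
    rw [psi1, Ideal.Quotient.liftₐ_apply]
    show phi1 (psi1Pre (LaurentPolynomial.T 1)) = _
    rw [psi1Pre_T, ρ, phi1, Ideal.Quotient.liftₐ_apply]
    show phi1Pre (Rvar 2) = _
    rw [phi1Pre_R]
    show ((vQ ^ (1:ℤ) : Q2ˣ) : Q2) = _
    rw [hv1, tq]
  · apply Ideal.Quotient.algHom_ext
    refine AddMonoidAlgebra.algHom_ext' (Finsupp.mulHom_ext' fun i => MonoidHom.ext_mint ?_)
      (Subsingleton.elim _ _)
    show psi1 (phi1 (Ideal.Quotient.mk idealK6 (Rvar i))) = Ideal.Quotient.mk idealK6 (Rvar i)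
    rw [phi1, Ideal.Quotient.liftₐ_apply]
    show psi1 (phi1Pre (Rvar i)) = ρ i
    rw [phi1Pre_R, psi1_vpow]
    fin_cases i
    · show ((rQ ^ (2:ℤ) : Q1ˣ) : Q1) = ρ 0
      rw [show (2:ℤ) = ((2:ℕ):ℤ) from rfl, zpow_natCast, Units.val_pow_eq_pow_val]
      exact hρ0.symm
    · show ((rQ ^ (-3:ℤ) : Q1ˣ) : Q1) = ρ 1
      rw [show (-3:ℤ) = -((3:ℕ):ℤ) from rfl, zpow_neg, zpow_natCast, ← inv_pow,
        Units.val_pow_eq_pow_val]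
      show ((rQ⁻¹ : Q1ˣ) : Q1) ^ 3 = ρ 1
      rw [show ((rQ⁻¹ : Q1ˣ) : Q1) = ρ 1 * ρ 2 ^ 2 from rfl]
      linear_combination (ρ 1 * (ρ 1 * ρ 2 ^ 3 + 1)) * hg3
    · show ((rQ ^ (1:ℤ) : Q1ˣ) : Q1) = ρ 2
      rw [zpow_one]
      rfl

end Aux

/-- for the cone generated by `v₁=(0,1)`, `v₂=(1,1)`, `v₃=(3,1)` with fan `Σ`
having maximal cones `{1,2}` and `{2,3}`, the ring
`K₀(ℙ_Σ) = ℂ[R₁^{±1},R₂^{±1},R₃^{±1}]/⟨(1−R₁)(1−R₃), R₁R₂R₃−1, R₂R₃³−1⟩` is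
isomorphic as a ℂ-algebra to `ℂ[R₃^{±1}]/⟨(1−R₃)²(1+R₃)⟩`, and the latter is
3-dimensional over ℂ with basis `1, R₃, R₃²`. -/
theorem stmt6 :
    Nonempty ((Laurent3 ⧸ idealK6) ≃ₐ[ℂ] (LaurentPolynomial ℂ ⧸ idealT6)) ∧
    Module.finrank ℂ (LaurentPolynomial ℂ ⧸ idealT6) = 3 ∧
    ∃ b : Module.Basis (Fin 3) ℂ (LaurentPolynomial ℂ ⧸ idealT6),
      ∀ k : Fin 3,
        b k = (Ideal.Quotient.mk idealT6 (LaurentPolynomial.T 1)) ^ (k : ℕ) := by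
  refine ⟨⟨eQ1Q2⟩, finrankQ2, basisQ2, fun k => basisQ2_apply k⟩
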